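/- Assume the training data is noiseless, i.e. Y = G·P, and let α ≥ 0, β ≥ 0. Define the linear model-constrained decoder (mcDecoder) loss J(We, be, Wd, bd) = (1/2)·‖P − Wd·(We·P + be·𝟙ᵀ) − bd·𝟙ᵀ‖² + (α/2)·‖Y − We·P − be·𝟙ᵀ‖² + (β/2)·‖Y − G·Wd·(We·P + be·𝟙ᵀ) − G·bd·𝟙ᵀ‖², for We ∈ ℝ^{n×m}, be ∈ ℝ^n, Wd ∈ ℝ^{m×n}, bd ∈ ℝ^m. If Wd₀ ∈ ℝ^{m×n} satisfies Wd₀·G = I_m, then J(G, 0, Wd₀, 0) = 0; consequently, since J is nonnegative, the point (We, be, Wd, bd) = (G, 0, Wd₀, 0) is a global minimizer of J and hence a stationary point of J (the Fréchet derivative of J vanishes there). -/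
import Mathlib

open Matrix

attribute [local instance] Matrix.seminormedAddCommGroup Matrix.normedAddCommGroup
  Matrix.normedSpace

/-- Squared Frobenius norm of a real matrix: `‖X‖² = tr(Xᵀ X)`. -/
noncomputable def frobSq {k l : ℕ} (X : Matrix (Fin k) (Fin l) ℝ) : ℝ :=
  Matrix.trace (Xᵀ * X)

lemma frobSq_eq {k l : ℕ} (X : Matrix (Fin k) (Fin l) ℝ) :
    frobSq X = ∑ j, ∑ i, X i j * X i j := by
  simp [frobSq, Matrix.trace, Matrix.mul_apply, Matrix.diag]

lemma frobSq_nonneg {k l : ℕ} (X : Matrix (Fin k) (Fin l) ℝ) : 0 ≤ frobSq X := by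
  rw [frobSq_eq]
  exact Finset.sum_nonneg fun j _ => Finset.sum_nonneg fun i _ => mul_self_nonneg _

lemma frobSq_zero {k l : ℕ} : frobSq (0 : Matrix (Fin k) (Fin l) ℝ) = 0 := by
  simp [frobSq_eq]

section diffs

variable {E : Type*} [NormedAddCommGroup E] [NormedSpace ℝ E]

lemma diff_entry {k l : ℕ} {f : E → Matrix (Fin k) (Fin l) ℝ}
    (hf : Differentiable ℝ f) (i : Fin k) (j : Fin l) :
    Differentiable ℝ (fun x => f x i j) :=
  differentiable_pi.mp (differentiable_pi.mp hf i) j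

lemma diff_matrix {k l : ℕ} {f : E → Matrix (Fin k) (Fin l) ℝ}
    (hf : ∀ i j, Differentiable ℝ (fun x => f x i j)) :
    Differentiable ℝ f :=
  differentiable_pi.mpr fun i => differentiable_pi.mpr fun j => hf i j

lemma diff_mulM {k l r : ℕ} {f : E → Matrix (Fin k) (Fin l) ℝ}
    {g : E → Matrix (Fin l) (Fin r) ℝ}
    (hf : Differentiable ℝ f) (hg : Differentiable ℝ g) :
    Differentiable ℝ (fun x => f x * g x) := by
  apply diff_matrix
  intro i j
  have : (fun x => (f x * g x) i j) = fun x => ∑ s, f x i s * g x s j := by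
    funext x; simp [Matrix.mul_apply]
  rw [this]
  exact Differentiable.fun_sum fun s _ => (diff_entry hf i s).mul (diff_entry hg s j)

lemma diff_frobSq {k l : ℕ} {f : E → Matrix (Fin k) (Fin l) ℝ}
    (hf : Differentiable ℝ f) :
    Differentiable ℝ (fun x => frobSq (f x)) := by
  have : (fun x => frobSq (f x)) = fun x => ∑ j, ∑ i, f x i j * f x i j := by
    funext x; rw [frobSq_eq]
  rw [this]
  exact Differentiable.fun_sum fun j _ => Differentiable.fun_sum fun i _ =>
    (diff_entry hf i j).mul (diff_entry hf i j)

end diffs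

/-- For noiseless data `Y = G P`, if `Wd₀ G = I` then `(G, 0, Wd₀, 0)` attains
zero loss in the mcDecoder formulation, hence is a global minimizer and a
stationary point. -/
theorem mcDecoder_stationary_point
    {m n nt : ℕ} (hm : 0 < m) (hn : 0 < n) (hnt : 0 < nt)
    (P : Matrix (Fin m) (Fin nt) ℝ) (G : Matrix (Fin n) (Fin m) ℝ)
    (Y : Matrix (Fin n) (Fin nt) ℝ) (hY : Y = G * P)
    (α β : ℝ) (hα : 0 ≤ α) (hβ : 0 ≤ β)
    (J : Matrix (Fin n) (Fin m) ℝ × (Fin n → ℝ) ×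
         Matrix (Fin m) (Fin n) ℝ × (Fin m → ℝ) → ℝ)
    (hJ : ∀ We be Wd bd, J (We, be, Wd, bd) =
      (1 / 2) * frobSq (P - Wd * (We * P + vecMulVec be 1) - vecMulVec bd 1) +
      (α / 2) * frobSq (Y - We * P - vecMulVec be 1) +
      (β / 2) * frobSq (Y - G * Wd * (We * P + vecMulVec be 1)
        - G * vecMulVec bd 1))
    (Wd0 : Matrix (Fin m) (Fin n) ℝ) (hWd0 : Wd0 * G = 1) :
    J (G, 0, Wd0, 0) = 0 ∧
    (∀ p, J (G, 0, Wd0, 0) ≤ J p) ∧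
    HasFDerivAt J (0 : _ →L[ℝ] ℝ) (G, 0, Wd0, 0) := by
  have hv0m : vecMulVec (0 : Fin m → ℝ) (1 : Fin nt → ℝ) = 0 := by
    ext i j; simp [vecMulVec]
  have hv0n : vecMulVec (0 : Fin n → ℝ) (1 : Fin nt → ℝ) = 0 := by
    ext i j; simp [vecMulVec]
  -- value at the candidate point
  have hzero : J (G, 0, Wd0, 0) = 0 := by
    rw [hJ, hv0m, hv0n]
    have h1 : Wd0 * (G * P + 0) = P := by
      rw [add_zero, ← Matrix.mul_assoc, hWd0, Matrix.one_mul]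
    have h2 : G * Wd0 * (G * P + 0) = G * P := by
      rw [add_zero, Matrix.mul_assoc, ← Matrix.mul_assoc Wd0, hWd0, Matrix.one_mul]
    rw [h1, h2, hY]
    simp [frobSq_zero]
  have hmin : ∀ p, J (G, 0, Wd0, 0) ≤ J p := by
    intro p
    obtain ⟨We, be, Wd, bd⟩ := p
    rw [hzero, hJ]
    have h1 := frobSq_nonneg (P - Wd * (We * P + vecMulVec be 1) - vecMulVec bd 1)
    have h2 := frobSq_nonneg (Y - We * P - vecMulVec be 1)
    have h3 := frobSq_nonneg (Y - G * Wd * (We * P + vecMulVec be 1) - G * vecMulVec bd 1)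
    positivity
  refine ⟨hzero, hmin, ?_⟩
  -- rewrite J as an explicit function
  have hJfun : J = fun p =>
      (1 / 2) * frobSq (P - p.2.2.1 * (p.1 * P + vecMulVec p.2.1 1) - vecMulVec p.2.2.2 1) +
      (α / 2) * frobSq (Y - p.1 * P - vecMulVec p.2.1 1) +
      (β / 2) * frobSq (Y - G * p.2.2.1 * (p.1 * P + vecMulVec p.2.1 1)
        - G * vecMulVec p.2.2.2 1) := by
    funext p
    obtain ⟨We, be, Wd, bd⟩ := p
    exact hJ We be Wd bd
  -- differentiability
  have dWe : Differentiable ℝ (fun p : Matrix (Fin n) (Fin m) ℝ × (Fin n → ℝ) ×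
      Matrix (Fin m) (Fin n) ℝ × (Fin m → ℝ) => p.1) := differentiable_fst
  have dbe : Differentiable ℝ (fun p : Matrix (Fin n) (Fin m) ℝ × (Fin n → ℝ) ×
      Matrix (Fin m) (Fin n) ℝ × (Fin m → ℝ) => p.2.1) := differentiable_snd.fst
  have dWd : Differentiable ℝ (fun p : Matrix (Fin n) (Fin m) ℝ × (Fin n → ℝ) ×
      Matrix (Fin m) (Fin n) ℝ × (Fin m → ℝ) => p.2.2.1) := differentiable_snd.snd.fst
  have dbd : Differentiable ℝ (fun p : Matrix (Fin n) (Fin m) ℝ × (Fin n → ℝ) ×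
      Matrix (Fin m) (Fin n) ℝ × (Fin m → ℝ) => p.2.2.2) := differentiable_snd.snd.snd
  have dve : Differentiable ℝ (fun p : Matrix (Fin n) (Fin m) ℝ × (Fin n → ℝ) ×
      Matrix (Fin m) (Fin n) ℝ × (Fin m → ℝ) => vecMulVec p.2.1 (1 : Fin nt → ℝ)) := by
    apply diff_matrix
    intro i j
    have : (fun p : Matrix (Fin n) (Fin m) ℝ × (Fin n → ℝ) ×
        Matrix (Fin m) (Fin n) ℝ × (Fin m → ℝ) => vecMulVec p.2.1 (1 : Fin nt → ℝ) i j)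
        = fun p => p.2.1 i := by
      funext p; simp [vecMulVec]
    rw [this]
    exact differentiable_pi.mp dbe i
  have dvd : Differentiable ℝ (fun p : Matrix (Fin n) (Fin m) ℝ × (Fin n → ℝ) ×
      Matrix (Fin m) (Fin n) ℝ × (Fin m → ℝ) => vecMulVec p.2.2.2 (1 : Fin nt → ℝ)) := by
    apply diff_matrix
    intro i j
    have : (fun p : Matrix (Fin n) (Fin m) ℝ × (Fin n → ℝ) ×
        Matrix (Fin m) (Fin n) ℝ × (Fin m → ℝ) => vecMulVec p.2.2.2 (1 : Fin nt → ℝ) i j)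
        = fun p => p.2.2.2 i := by
      funext p; simp [vecMulVec]
    rw [this]
    exact differentiable_pi.mp dbd i
  have dA : Differentiable ℝ (fun p : Matrix (Fin n) (Fin m) ℝ × (Fin n → ℝ) ×
      Matrix (Fin m) (Fin n) ℝ × (Fin m → ℝ) => p.1 * P + vecMulVec p.2.1 1) :=
    (diff_mulM dWe (differentiable_const P)).add dve
  have hdiff : Differentiable ℝ J := by
    rw [hJfun]
    refine Differentiable.add (Differentiable.add ?_ ?_) ?_
    · exact Differentiable.const_mul
        (diff_frobSq (((differentiable_const P).sub (diff_mulM dWd dA)).sub dvd)) _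
    · exact Differentiable.const_mul
        (diff_frobSq (((differentiable_const Y).sub
          (diff_mulM dWe (differentiable_const P))).sub dve)) _
    · exact Differentiable.const_mul
        (diff_frobSq (((differentiable_const Y).sub
          (diff_mulM (diff_mulM (differentiable_const G) dWd) dA)).sub
          (diff_mulM (differentiable_const G) dvd))) _
  have hloc : IsLocalMin J (G, 0, Wd0, 0) :=
    Filter.Eventually.of_forall hmin
  have hfd := (hdiff (G, 0, Wd0, 0)).hasFDerivAt
  have h0 := hloc.hasFDerivAt_eq_zero hfd
  rwa [h0] at hfd
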